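/- If J is a face of the cone of n×n positive semidefinite real symmetric matrices, then the convex hull of the set of rank-one matrices contained in J equals J itself. -/

import Mathlib

open Matrix Pointwise

/-- The cone of n×n real positive semidefinite symmetric matrices. -/
def PSDcone (n : ℕ) : Set (Matrix (Fin n) (Fin n) ℝ) := {X | X.PosSemidef}

/-- Γ^n = {x xᵀ : x ∈ ℝ^n}, the rank-one PSD matrices (together with 0). -/
def Gamma (n : ℕ) : Set (Matrix (Fin n) (Fin n) ℝ) :=
  {X | ∃ x : Fin n → ℝ, X = vecMulVec x x}

/-- F is a face of the convex cone K: F is a convex subcone of K such that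
whenever X, Y ∈ K and X + Y ∈ F, then X, Y ∈ F. -/
def IsFaceOf {n : ℕ} (K F : Set (Matrix (Fin n) (Fin n) ℝ)) : Prop :=
  F ⊆ K ∧ Convex ℝ F ∧ (∀ X ∈ F, ∀ c : ℝ, 0 ≤ c → c • X ∈ F) ∧
    ∀ X ∈ K, ∀ Y ∈ K, X + Y ∈ F → X ∈ F ∧ Y ∈ F

lemma psd_vecMulVec {n : ℕ} (x : Fin n → ℝ) : (vecMulVec x x).PosSemidef := by
  refine PosSemidef.of_dotProduct_mulVec_nonneg ?_ ?_
  · ext i j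
    simp [vecMulVec_apply, conjTranspose_apply, mul_comm]
  · intro y
    have : y ⬝ᵥ (vecMulVec x x).mulVec y = (x ⬝ᵥ y) * (x ⬝ᵥ y) := by
      simp only [dotProduct, mulVec, vecMulVec_apply, Finset.sum_mul, Finset.mul_sum]
      rw [Finset.sum_comm]
      congr 1; ext i; congr 1; ext j; ring
    simp only [star_trivial]
    rw [this]
    exact mul_self_nonneg _

/-- Sum over a finset of PSD matrices in a face is termwise in the face. -/
lemma face_mem_of_sum {n : ℕ} {J : Set (Matrix (Fin n) (Fin n) ℝ)}
    (hJ : IsFaceOf (PSDcone n) J) {ι : Type*} [DecidableEq ι] (s : Finset ι)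
    (M : ι → Matrix (Fin n) (Fin n) ℝ) (hM : ∀ i ∈ s, (M i).PosSemidef)
    (hsum : (∑ i ∈ s, M i) ∈ J) : ∀ i ∈ s, M i ∈ J := by
  intro i hi
  have hrest : (∑ j ∈ s.erase i, M j).PosSemidef := by
    refine Finset.sum_induction _ _ (fun a b ha hb => ha.add hb) .zero ?_
    intro j hj
    exact hM j (Finset.mem_of_mem_erase hj)
  have h := hJ.2.2.2 (M i) (hM i hi) (∑ j ∈ s.erase i, M j) hrest
  rw [Finset.add_sum_erase s M hi] at h
  exact (h hsum).1

theorem stmt0 {n : ℕ} (J : Set (Matrix (Fin n) (Fin n) ℝ))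
    (hJ : IsFaceOf (PSDcone n) J) :
    convexHull ℝ (J ∩ Gamma n) = J := by
  apply le_antisymm
  · exact convexHull_min Set.inter_subset_left hJ.2.1
  · intro X hX
    -- spectral-type decomposition via the PSD square root
    have hXpsd : X.PosSemidef := hJ.1 hX
    set B := (open scoped MatrixOrder in CFC.sqrt X) with hB
    have hBpsd : B.PosSemidef := by
      open scoped MatrixOrder in exact nonneg_iff_posSemidef.mp (CFC.sqrt_nonneg X)
    have hBsym : Bᵀ = B := by
      have := hBpsd.1
      rwa [Matrix.IsHermitian, conjTranspose_eq_transpose_of_trivial] at this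
    have hdecomp : X = ∑ k : Fin n, vecMulVec (B k) (B k) := by
      have hmul : B * B = X := by
        open scoped MatrixOrder in exact CFC.sqrt_mul_sqrt_self X (nonneg_iff_posSemidef.mpr hXpsd)
      rw [← hmul]
      ext i j
      simp only [Matrix.mul_apply, Matrix.sum_apply, vecMulVec_apply]
      apply Finset.sum_congr rfl
      intro k _
      have : B i k = B k i := by
        conv_lhs => rw [← hBsym]
        rfl
      rw [this]
    -- each rank-one term is in J ∩ Γ
    have hterms : ∀ k : Fin n, vecMulVec (B k) (B k) ∈ J ∩ Gamma n := by
      intro k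
      refine ⟨?_, ⟨B k, rfl⟩⟩
      apply face_mem_of_sum hJ Finset.univ _ (fun i _ => psd_vecMulVec (B i))
      · rw [← hdecomp]; exact hX
      · exact Finset.mem_univ k
    -- J ∩ Γ is closed under nonneg scaling, hence its hull is closed under addition
    have hscale : ∀ c : ℝ, 0 ≤ c → ∀ Y ∈ J ∩ Gamma n, c • Y ∈ J ∩ Gamma n := by
      rintro c hc Y ⟨hYJ, x, rfl⟩
      refine ⟨hJ.2.2.1 _ hYJ c hc, Real.sqrt c • x, ?_⟩
      ext i j
      simp only [Matrix.smul_apply, vecMulVec_apply, Pi.smul_apply, smul_eq_mul]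
      rw [show Real.sqrt c * x i * (Real.sqrt c * x j)
          = (Real.sqrt c * Real.sqrt c) * (x i * x j) by ring,
        Real.mul_self_sqrt hc]
    have hullscale : ∀ c : ℝ, 0 ≤ c →
        ∀ Y ∈ convexHull ℝ (J ∩ Gamma n), c • Y ∈ convexHull ℝ (J ∩ Gamma n) := by
      intro c hc Y hY
      have h1 : c • Y ∈ c • convexHull ℝ (J ∩ Gamma n) := ⟨Y, hY, rfl⟩
      rw [← convexHull_smul] at h1
      refine convexHull_mono ?_ h1
      rintro Z ⟨W, hW, rfl⟩
      exact hscale c hc W hW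
    have hadd : ∀ A ∈ convexHull ℝ (J ∩ Gamma n), ∀ C ∈ convexHull ℝ (J ∩ Gamma n),
        A + C ∈ convexHull ℝ (J ∩ Gamma n) := by
      intro A hA C hC
      have hmid : (1/2 : ℝ) • A + (1/2 : ℝ) • C ∈ convexHull ℝ (J ∩ Gamma n) :=
        (convex_convexHull ℝ _) hA hC (by norm_num) (by norm_num) (by norm_num)
      have := hullscale 2 (by norm_num) _ hmid
      rwa [smul_add, smul_smul, smul_smul, show (2 : ℝ) * (1/2) = 1 by norm_num,
        one_smul, one_smul] at this
    -- 0 is in J ∩ Γ since J is nonempty (X ∈ J)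
    have h0 : (0 : Matrix (Fin n) (Fin n) ℝ) ∈ J ∩ Gamma n := by
      refine ⟨?_, 0, ?_⟩
      · have := hJ.2.2.1 X hX 0 le_rfl
        simpa using this
      · ext i j; simp [vecMulVec_apply]
    rw [hdecomp]
    exact Finset.sum_induction _ (· ∈ convexHull ℝ (J ∩ Gamma n))
      (fun a b ha hb => hadd a ha b hb) (subset_convexHull ℝ _ h0)
      (fun k _ => subset_convexHull ℝ _ (hterms k))
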